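/- The exchange graph of Farey triples is a 3-regular tree. In particular, for every Farey triple q̄ and every natural number n, the number of Farey triples obtainable from q̄ by a sequence of at most n mutations equals 3·2^n − 2. -/

import Mathlib

/-- `ℚ∞ = ℚ ∪ {∞}`, ordered with `∞ = ⊤` as the greatest element. -/
abbrev QInf : Type := WithTop ℚ

/-- The numerator `d(q)` of the reduced representation `q = d(q)/r(q)`; `d(∞) = 1`. -/
def fnum : QInf → ℤ := WithTop.recTopCoe 1 (fun q => q.num)

/-- The denominator `r(q)` of the reduced representation `q = d(q)/r(q)`; `r(∞) = 0`. -/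
def fden : QInf → ℤ := WithTop.recTopCoe 0 (fun q => (q.den : ℤ))

/-- The element of `ℚ∞` represented by the fraction `a / b`: it is `∞` if `b = 0`,
and otherwise the rational number `a / b` (normalized so that the denominator is
positive and the fraction is in lowest terms). -/
def fmk (a b : ℤ) : QInf := if b = 0 then (⊤ : QInf) else (((a : ℚ) / (b : ℚ)) : ℚ)

/-- The Farey distance `Δ(p,q) = |d(p)r(q) - d(q)r(p)|`. -/
def fdist (p q : QInf) : ℤ := |fnum p * fden q - fnum q * fden p|

/-- `p` and `q` are Farey neighbours if `Δ(p,q) = 1`. -/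
def FareyNbr (p q : QInf) : Prop := fdist p q = 1

/-- The Farey sum `p ⊕ q = (d(p) + d(q)) / (r(p) + r(q))`. -/
def fsum (p q : QInf) : QInf := fmk (fnum p + fnum q) (fden p + fden q)

/-- The Farey difference `p ⊖ q = (d(p) - d(q)) / (r(p) - r(q))`. -/
def fdiff (p q : QInf) : QInf := fmk (fnum p - fnum q) (fden p - fden q)

/-- A Farey triple: a three-element subset of `ℚ∞` whose elements are pairwise
Farey neighbours. -/
def IsFareyTriple (s : Set QInf) : Prop := s.ncard = 3 ∧ s.Pairwise FareyNbr

/-- The element replacing `p` in the mutation of the Farey triple `{p, q, r}` in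
direction `p`: it is `q ⊖ r` if `p` lies strictly between `q` and `r`, and `q ⊕ r`
otherwise. -/
def fareyMutEl (p q r : QInf) : QInf :=
  if (q < p ∧ p < r) ∨ (r < p ∧ p < q) then fdiff q r else fsum q r

/-- The mutation of the Farey triple `{p, q, r}` in direction `p`. -/
def fareyMut (p q r : QInf) : Set QInf := {fareyMutEl p q r, q, r}

/-- The complexity `c(q) = |d(q)| + r(q) + |d(q) - r(q)|`. -/
def complexity (x : QInf) : ℤ := |fnum x| + fden x + |fnum x - fden x|

/-- `t` is obtained from `s` by a single mutation of Farey triples. -/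
def IsMutationOf (s t : Set QInf) : Prop :=
  ∃ a b c : QInf, a ≠ b ∧ a ≠ c ∧ b ≠ c ∧ s = {a, b, c} ∧ t = fareyMut a b c

/-- The exchange graph of Farey triples: vertices are the Farey triples, with an
edge between two Farey triples whenever one is obtained from the other by a single
mutation. -/
def fareyExchangeGraph : SimpleGraph {s : Set QInf // IsFareyTriple s} where
  Adj s t := s ≠ t ∧ (IsMutationOf s.val t.val ∨ IsMutationOf t.val s.val)
  symm := by
    constructor
    rintro s t ⟨hne, h⟩
    exact ⟨hne.symm, h.symm⟩
  loopless := by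
    constructor
    rintro s ⟨hne, -⟩
    exact hne rfl


/-! ### Section 1 : coordinate API for `QInf` -/

@[simp] lemma fnum_top : fnum ⊤ = 1 := rfl
@[simp] lemma fden_top : fden ⊤ = 0 := rfl
@[simp] lemma fnum_coe (q : ℚ) : fnum (q : QInf) = q.num := rfl
@[simp] lemma fden_coe (q : ℚ) : fden (q : QInf) = (q.den : ℤ) := rfl

lemma fden_nonneg (x : QInf) : 0 ≤ fden x := by
  induction x using WithTop.recTopCoe with
  | top => simp
  | coe q => simp

lemma fden_pos (x : QInf) (hx : x ≠ ⊤) : 0 < fden x := by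
  induction x using WithTop.recTopCoe with
  | top => simp at hx
  | coe q => simpa using q.pos

lemma coprime_fnum_fden (x : QInf) : Int.gcd (fnum x) (fden x) = 1 := by
  induction x using WithTop.recTopCoe with
  | top => simp
  | coe q => simpa [Int.gcd] using q.reduced

@[simp] lemma fmk_zero (a : ℤ) : fmk a 0 = ⊤ := by simp [fmk]

lemma fmk_coe (a b : ℤ) (hb : b ≠ 0) : fmk a b = (((a : ℚ) / (b : ℚ)) : QInf) := by
  simp [fmk, hb]

lemma fnum_fmk (a b : ℤ) (h : Int.gcd a b = 1) (hb : 0 < b) : fnum (fmk a b) = a := by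
  rw [fmk_coe a b hb.ne', fnum_coe]
  exact Rat.num_div_eq_of_coprime hb h

lemma fden_fmk (a b : ℤ) (h : Int.gcd a b = 1) (hb : 0 < b) : fden (fmk a b) = b := by
  rw [fmk_coe a b hb.ne', fden_coe]
  exact Rat.den_div_eq_of_coprime hb h

lemma fmk_self (x : QInf) : fmk (fnum x) (fden x) = x := by
  induction x using WithTop.recTopCoe with
  | top => simp
  | coe q =>
      rw [fmk_coe _ _ (by simpa using q.den_nz), fnum_coe, fden_coe]
      push_cast
      rw [Rat.num_div_den]

lemma fmk_neg (a b : ℤ) : fmk (-a) (-b) = fmk a b := by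
  rcases eq_or_ne b 0 with rfl | hb
  · simp
  · rw [fmk_coe _ _ (neg_ne_zero.mpr hb), fmk_coe _ _ hb]
    push_cast
    rw [neg_div_neg_eq]

lemma qinf_lt_iff (x y : QInf) : x < y ↔ fnum x * fden y < fnum y * fden x := by
  induction x using WithTop.recTopCoe with
  | top =>
      induction y using WithTop.recTopCoe with
      | top => simp
      | coe q =>
          simp only [fnum_top, fden_top, fnum_coe, fden_coe, mul_zero, one_mul]
          constructor
          · intro h; exact absurd h (by simp [not_top_lt])
          · intro h; exact absurd h (not_lt.mpr (by positivity))
  | coe p =>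
      induction y using WithTop.recTopCoe with
      | top =>
          simp only [fnum_top, fden_top, fnum_coe, fden_coe, mul_zero, mul_one, one_mul]
          constructor
          · intro _; positivity
          · intro _; exact WithTop.coe_lt_top p
      | coe q =>
          rw [WithTop.coe_lt_coe]
          simp only [fnum_coe, fden_coe]
          exact Rat.lt_iff _ _

lemma qinf_eq_iff (x y : QInf) : x = y ↔ fnum x = fnum y ∧ fden x = fden y := by
  constructor
  · rintro rfl; exact ⟨rfl, rfl⟩
  · rintro ⟨h1, h2⟩
    rw [← fmk_self x, ← fmk_self y, h1, h2]

/-! ### Section 2 : coordinates for Farey triples -/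

def Good (a b c d : ℤ) : Prop := 1 ≤ b ∧ 0 ≤ d ∧ c * b - a * d = 1

def trip (a b c d : ℤ) : Set QInf := {fmk a b, fmk (a+c) (b+d), fmk c d}

namespace Good

variable {a b c d : ℤ} (h : Good a b c d)

include h

lemma gcd_ab : Int.gcd a b = 1 := by
  rw [← Int.isCoprime_iff_gcd_eq_one]
  exact ⟨-d, c, by linarith [h.2.2]⟩

lemma gcd_cd : Int.gcd c d = 1 := by
  rw [← Int.isCoprime_iff_gcd_eq_one]
  exact ⟨b, -a, by linarith [h.2.2]⟩

lemma gcd_mid : Int.gcd (a + c) (b + d) = 1 := by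
  rw [← Int.isCoprime_iff_gcd_eq_one]
  exact ⟨-d, c, by linarith [h.2.2]⟩

lemma bpos : 0 < b := h.1
lemma dnn : 0 ≤ d := h.2.1
lemma det : c * b - a * d = 1 := h.2.2
lemma midpos : 0 < b + d := by linarith [h.1, h.2.1]

lemma num_p : fnum (fmk a b) = a := fnum_fmk a b h.gcd_ab h.bpos
lemma den_p : fden (fmk a b) = b := fden_fmk a b h.gcd_ab h.bpos
lemma num_m : fnum (fmk (a+c) (b+d)) = a + c := fnum_fmk _ _ h.gcd_mid h.midpos
lemma den_m : fden (fmk (a+c) (b+d)) = b + d := fden_fmk _ _ h.gcd_mid h.midpos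

lemma cd_of_d_eq_zero (hd : d = 0) : c = 1 ∧ b = 1 := by
  have hdet := h.det
  have h1 : c * b = 1 := by rw [hd] at hdet; linarith
  rcases Int.mul_eq_one_iff_eq_one_or_neg_one.mp h1 with ⟨hc, hb⟩ | ⟨hc, hb⟩
  · exact ⟨hc, hb⟩
  · exfalso; have := h.bpos; omega

lemma num_r : fnum (fmk c d) = c := by
  rcases eq_or_ne d 0 with rfl | hd
  · rw [(h.cd_of_d_eq_zero rfl).1]; simp
  · exact fnum_fmk c d h.gcd_cd (lt_of_le_of_ne h.dnn (Ne.symm hd))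

lemma den_r : fden (fmk c d) = d := by
  rcases eq_or_ne d 0 with rfl | hd
  · simp
  · exact fden_fmk c d h.gcd_cd (lt_of_le_of_ne h.dnn (Ne.symm hd))

lemma p_lt_m : fmk a b < fmk (a+c) (b+d) := by
  rw [qinf_lt_iff, h.num_p, h.den_p, h.num_m, h.den_m]
  nlinarith [h.det]

lemma m_lt_r : fmk (a+c) (b+d) < fmk c d := by
  rw [qinf_lt_iff, h.num_m, h.den_m, h.num_r, h.den_r]
  nlinarith [h.det]

lemma p_lt_r : fmk a b < fmk c d := h.p_lt_m.trans h.m_lt_r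

lemma nbr_pm : FareyNbr (fmk a b) (fmk (a+c) (b+d)) := by
  show fdist _ _ = 1
  rw [fdist, h.num_p, h.den_p, h.num_m, h.den_m]
  rw [abs_eq (by norm_num)]
  right; linarith [h.det]

lemma nbr_pr : FareyNbr (fmk a b) (fmk c d) := by
  show fdist _ _ = 1
  rw [fdist, h.num_p, h.den_p, h.num_r, h.den_r]
  rw [abs_eq (by norm_num)]
  right; linarith [h.det]

lemma nbr_mr : FareyNbr (fmk (a+c) (b+d)) (fmk c d) := by
  show fdist _ _ = 1
  rw [fdist, h.num_m, h.den_m, h.num_r, h.den_r]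
  rw [abs_eq (by norm_num)]
  right; linarith [h.det]

end Good

lemma fareyNbr_symm {p q : QInf} (h : FareyNbr p q) : FareyNbr q p := by
  unfold FareyNbr fdist at *
  rw [abs_sub_comm] at h
  exact h

lemma set3_sorted {α : Type*} [LinearOrder α] {s : Set α} (h : s.ncard = 3) :
    ∃ x y z : α, x < y ∧ y < z ∧ s = {x, y, z} := by
  obtain ⟨x, y, z, hxy, hxz, hyz, rfl⟩ := Set.ncard_eq_three.mp h
  rcases lt_trichotomy x y with h1 | rfl | h1
  · rcases lt_trichotomy y z with h2 | rfl | h2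
    · exact ⟨x, y, z, h1, h2, rfl⟩
    · exact absurd rfl hyz
    · rcases lt_trichotomy x z with h3 | rfl | h3
      · exact ⟨x, z, y, h3, h2, by ext t; simp; tauto⟩
      · exact absurd rfl hxz
      · exact ⟨z, x, y, h3, h1, by ext t; simp; tauto⟩
  · exact absurd rfl hxy
  · rcases lt_trichotomy x z with h2 | rfl | h2
    · exact ⟨y, x, z, h1, h2, by ext t; simp; tauto⟩
    · exact absurd rfl hxz
    · rcases lt_trichotomy y z with h3 | rfl | h3
      · exact ⟨y, z, x, h3, h2, by ext t; simp; tauto⟩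
      · exact absurd rfl hyz
      · exact ⟨z, y, x, h3, h1, by ext t; simp; tauto⟩

/-- a 3-element set listed in increasing order is unique -/
lemma sorted3_inj {α : Type*} [LinearOrder α] {x y z x' y' z' : α}
    (h1 : x < y) (h2 : y < z) (h1' : x' < y') (h2' : y' < z')
    (hs : ({x, y, z} : Set α) = {x', y', z'}) : x = x' ∧ y = y' ∧ z = z' := by
  have least : ∀ t ∈ ({x, y, z} : Set α), x ≤ t := by
    intro t ht
    simp only [Set.mem_insert_iff, Set.mem_singleton_iff] at ht
    rcases ht with rfl | rfl | rfl
    · exact le_refl _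
    · exact h1.le
    · exact (h1.trans h2).le
  have least' : ∀ t ∈ ({x', y', z'} : Set α), x' ≤ t := by
    intro t ht
    simp only [Set.mem_insert_iff, Set.mem_singleton_iff] at ht
    rcases ht with rfl | rfl | rfl
    · exact le_refl _
    · exact h1'.le
    · exact (h1'.trans h2').le
  have greatest : ∀ t ∈ ({x, y, z} : Set α), t ≤ z := by
    intro t ht
    simp only [Set.mem_insert_iff, Set.mem_singleton_iff] at ht
    rcases ht with rfl | rfl | rfl
    · exact (h1.trans h2).le
    · exact h2.le
    · exact le_refl _
  have greatest' : ∀ t ∈ ({x', y', z'} : Set α), t ≤ z' := by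
    intro t ht
    simp only [Set.mem_insert_iff, Set.mem_singleton_iff] at ht
    rcases ht with rfl | rfl | rfl
    · exact (h1'.trans h2').le
    · exact h2'.le
    · exact le_refl _
  have mx : x ∈ ({x', y', z'} : Set α) := by rw [← hs]; simp
  have mx' : x' ∈ ({x, y, z} : Set α) := by rw [hs]; simp
  have mz : z ∈ ({x', y', z'} : Set α) := by rw [← hs]; simp
  have mz' : z' ∈ ({x, y, z} : Set α) := by rw [hs]; simp
  have my : y ∈ ({x', y', z'} : Set α) := by rw [← hs]; simp
  have hxx : x = x' := le_antisymm (least x' mx') (least' x mx)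
  have hzz : z = z' := le_antisymm (greatest' z mz) (greatest z' mz')
  refine ⟨hxx, ?_, hzz⟩
  simp only [Set.mem_insert_iff, Set.mem_singleton_iff] at my
  rcases my with h | h | h
  · exfalso; rw [h, ← hxx] at h1; exact lt_irrefl x h1
  · exact h
  · exfalso; rw [h, ← hzz] at h2; exact lt_irrefl z h2

/-- Farey triples are exactly the `trip a b c d` for `Good a b c d`. -/
theorem isFareyTriple_iff {s : Set QInf} :
    IsFareyTriple s ↔ ∃ a b c d : ℤ, Good a b c d ∧ s = trip a b c d := by
  constructor
  · rintro ⟨hcard, hpw⟩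
    obtain ⟨x, y, z, hxy, hyz, rfl⟩ := set3_sorted hcard
    have hxz : x < z := hxy.trans hyz
    have hxtop : x ≠ ⊤ := fun hx => by subst hx; exact absurd hxy (by simp [not_top_lt])
    have hytop : y ≠ ⊤ := fun hy => by subst hy; exact absurd hyz (by simp [not_top_lt])
    set a := fnum x with ha
    set b := fden x with hb
    set c := fnum z with hc
    set d := fden z with hd
    set e := fnum y with he
    set f := fden y with hf
    have hb1 : 1 ≤ b := fden_pos x hxtop
    have hf1 : 1 ≤ f := fden_pos y hytop
    have hd0 : 0 ≤ d := fden_nonneg z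
    have nxz : FareyNbr x z := hpw (by simp) (by simp) hxz.ne
    have nxy : FareyNbr x y := hpw (by simp) (by simp) hxy.ne
    have nyz : FareyNbr y z := hpw (by simp) (by simp) hyz.ne
    have oxz : a * d < c * b := (qinf_lt_iff x z).mp hxz
    have oxy : a * f < e * b := (qinf_lt_iff x y).mp hxy
    have oyz : e * d < c * f := (qinf_lt_iff y z).mp hyz
    have dxz : c * b - a * d = 1 := by
      have h1 : |a * d - c * b| = 1 := nxz
      rcases abs_eq (by norm_num : (0:ℤ) ≤ 1) |>.mp h1 with h2 | h2 <;> linarith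
    have dxy : e * b - a * f = 1 := by
      have h1 : |a * f - e * b| = 1 := nxy
      rcases abs_eq (by norm_num : (0:ℤ) ≤ 1) |>.mp h1 with h2 | h2 <;> linarith
    have dyz : c * f - e * d = 1 := by
      have h1 : |e * d - c * f| = 1 := nyz
      rcases abs_eq (by norm_num : (0:ℤ) ≤ 1) |>.mp h1 with h2 | h2 <;> linarith
    have hgood : Good a b c d := ⟨hb1, hd0, dxz⟩
    have key : f * (c * b - a * d) = b + d := by linear_combination d * dxy + b * dyz
    have hfeq : f = b + d := by rw [dxz] at key; linarith
    have heeq : e = a + c := by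
      have dxy' := dxy
      rw [hfeq] at dxy'
      have h0 : (e - a - c) * b = 0 := by linear_combination dxy' - dxz
      rcases mul_eq_zero.mp h0 with h0 | h0
      · linarith
      · exfalso; omega
    refine ⟨a, b, c, d, hgood, ?_⟩
    have hx : x = fmk a b := (fmk_self x).symm
    have hz : z = fmk c d := (fmk_self z).symm
    have hy : y = fmk (a+c) (b+d) := by
      rw [← heeq, ← hfeq]; exact (fmk_self y).symm
    rw [trip, ← hx, ← hy, ← hz]
  · rintro ⟨a, b, c, d, h, rfl⟩
    constructor
    · apply Set.ncard_eq_three.mpr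
      exact ⟨_, _, _, h.p_lt_m.ne, h.p_lt_r.ne, h.m_lt_r.ne, rfl⟩
    · intro u hu v hv huv
      simp only [trip, Set.mem_insert_iff, Set.mem_singleton_iff] at hu hv
      rcases hu with rfl | rfl | rfl <;> rcases hv with rfl | rfl | rfl
      · exact absurd rfl huv
      · exact h.nbr_pm
      · exact h.nbr_pr
      · exact fareyNbr_symm h.nbr_pm
      · exact absurd rfl huv
      · exact h.nbr_mr
      · exact fareyNbr_symm h.nbr_pr
      · exact fareyNbr_symm h.nbr_mr
      · exact absurd rfl huv

theorem trip_inj {a b c d a' b' c' d' : ℤ} (h : Good a b c d) (h' : Good a' b' c' d')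
    (e : trip a b c d = trip a' b' c' d') : a = a' ∧ b = b' ∧ c = c' ∧ d = d' := by
  obtain ⟨e1, e2, e3⟩ := sorted3_inj h.p_lt_m h.m_lt_r h'.p_lt_m h'.m_lt_r e
  have ha : a = a' := by rw [← h.num_p, ← h'.num_p, e1]
  have hb : b = b' := by rw [← h.den_p, ← h'.den_p, e1]
  have hc : c = c' := by rw [← h.num_r, ← h'.num_r, e3]
  have hd : d = d' := by rw [← h.den_r, ← h'.den_r, e3]
  exact ⟨ha, hb, hc, hd⟩

/-! ### Section 3 : mutations in coordinates -/

lemma fdiff_comm (p q : QInf) : fdiff p q = fdiff q p := by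
  rw [fdiff, fdiff, ← fmk_neg]
  congr 1 <;> ring

lemma fsum_comm (p q : QInf) : fsum p q = fsum q p := by
  rw [fsum, fsum]
  congr 1 <;> ring

lemma fareyMutEl_comm (p q r : QInf) : fareyMutEl p q r = fareyMutEl p r q := by
  rw [fareyMutEl, fareyMutEl]
  exact if_congr or_comm (fdiff_comm q r) (fsum_comm q r)

lemma fareyMut_comm (p q r : QInf) : fareyMut p q r = fareyMut p r q := by
  rw [fareyMut, fareyMut, fareyMutEl_comm]
  ext t
  simp only [Set.mem_insert_iff, Set.mem_singleton_iff]
  tauto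

namespace Good

variable {a b c d : ℤ} (h : Good a b c d)

include h

lemma goodN1 : Good (a+c) (b+d) c d :=
  ⟨by linarith [h.bpos, h.dnn], h.dnn, by linarith [h.det]⟩

lemma goodN3 : Good a b (a+c) (b+d) :=
  ⟨h.1, by linarith [h.bpos, h.dnn], by linarith [h.det]⟩

lemma goodN2l (hd : d < b) : Good (a-c) (b-d) c d :=
  ⟨by omega, h.dnn, by linarith [h.det]⟩

lemma goodN2r (hbd : b ≤ d) : Good a b (c-a) (d-b) :=
  ⟨h.1, by omega, by linarith [h.det]⟩

lemma mut_min : fareyMut (fmk a b) (fmk (a+c) (b+d)) (fmk c d) = trip (a+c) (b+d) c d := by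
  have hpm := h.p_lt_m
  have hmr := h.m_lt_r
  have hpr := h.p_lt_r
  have hcond : ¬ ((fmk (a+c) (b+d) < fmk a b ∧ fmk a b < fmk c d) ∨
      (fmk c d < fmk a b ∧ fmk a b < fmk (a+c) (b+d))) := by
    rintro (⟨h1, -⟩ | ⟨h1, -⟩)
    · exact absurd hpm (asymm h1)
    · exact absurd hpr (asymm h1)
  rw [fareyMut, fareyMutEl, if_neg hcond, fsum, h.num_m, h.den_m, h.num_r, h.den_r]
  rw [trip, Set.insert_comm]

lemma mut_max : fareyMut (fmk c d) (fmk (a+c) (b+d)) (fmk a b) = trip a b (a+c) (b+d) := by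
  have hpm := h.p_lt_m
  have hmr := h.m_lt_r
  have hpr := h.p_lt_r
  have hcond : ¬ ((fmk (a+c) (b+d) < fmk c d ∧ fmk c d < fmk a b) ∨
      (fmk a b < fmk c d ∧ fmk c d < fmk (a+c) (b+d))) := by
    rintro (⟨-, h1⟩ | ⟨-, h1⟩)
    · exact absurd hpr (asymm h1)
    · exact absurd hmr (asymm h1)
  rw [fareyMut, fareyMutEl, if_neg hcond, fsum, h.num_m, h.den_m, h.num_p, h.den_p]
  have e1 : fmk ((a+c) + a) ((b+d) + b) = fmk (a + (a+c)) (b + (b+d)) := by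
    congr 1 <;> ring
  rw [e1, trip]
  ext t; simp; tauto

lemma mut_mid_l (hd : d < b) :
    fareyMut (fmk (a+c) (b+d)) (fmk a b) (fmk c d) = trip (a-c) (b-d) c d := by
  have hpm := h.p_lt_m
  have hmr := h.m_lt_r
  have hcond : (fmk a b < fmk (a+c) (b+d) ∧ fmk (a+c) (b+d) < fmk c d) ∨
      (fmk c d < fmk (a+c) (b+d) ∧ fmk (a+c) (b+d) < fmk a b) := Or.inl ⟨hpm, hmr⟩
  rw [fareyMut, fareyMutEl, if_pos hcond, fdiff, h.num_p, h.den_p, h.num_r, h.den_r]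
  have e1 : fmk ((a-c) + c) ((b-d) + d) = fmk a b := by congr 1 <;> ring
  rw [trip, e1]

lemma mut_mid_r (hbd : b ≤ d) :
    fareyMut (fmk (a+c) (b+d)) (fmk a b) (fmk c d) = trip a b (c-a) (d-b) := by
  have hpm := h.p_lt_m
  have hmr := h.m_lt_r
  have hcond : (fmk a b < fmk (a+c) (b+d) ∧ fmk (a+c) (b+d) < fmk c d) ∨
      (fmk c d < fmk (a+c) (b+d) ∧ fmk (a+c) (b+d) < fmk a b) := Or.inl ⟨hpm, hmr⟩
  rw [fareyMut, fareyMutEl, if_pos hcond, fdiff, h.num_p, h.den_p, h.num_r, h.den_r]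
  have e0 : fmk (a - c) (b - d) = fmk (c - a) (d - b) := by
    have e1 : fmk (a - c) (b - d) = fmk (-(c-a)) (-(d-b)) := by congr 1 <;> ring
    rw [e1, fmk_neg]
  have e2 : fmk (a + (c-a)) (b + (d-b)) = fmk c d := by congr 1 <;> ring
  rw [e0, trip, e2]
  ext t; simp; tauto

lemma ne_pm : fmk a b ≠ fmk (a+c) (b+d) := h.p_lt_m.ne
lemma ne_pr : fmk a b ≠ fmk c d := h.p_lt_r.ne
lemma ne_mr : fmk (a+c) (b+d) ≠ fmk c d := h.m_lt_r.ne

lemma mutOf_min : IsMutationOf (trip a b c d) (trip (a+c) (b+d) c d) :=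
  ⟨fmk a b, fmk (a+c) (b+d), fmk c d, h.ne_pm, h.ne_pr, h.ne_mr, rfl, (h.mut_min).symm⟩

lemma mutOf_max : IsMutationOf (trip a b c d) (trip a b (a+c) (b+d)) :=
  ⟨fmk c d, fmk (a+c) (b+d), fmk a b, (h.ne_mr).symm, (h.ne_pr).symm, (h.ne_pm).symm,
    by rw [trip]; ext t; simp; tauto, (h.mut_max).symm⟩

lemma mutOf_mid_l (hd : d < b) : IsMutationOf (trip a b c d) (trip (a-c) (b-d) c d) :=
  ⟨fmk (a+c) (b+d), fmk a b, fmk c d, (h.ne_pm).symm, h.ne_mr, h.ne_pr,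
    by rw [trip]; ext t; simp; tauto, (h.mut_mid_l hd).symm⟩

lemma mutOf_mid_r (hbd : b ≤ d) : IsMutationOf (trip a b c d) (trip a b (c-a) (d-b)) :=
  ⟨fmk (a+c) (b+d), fmk a b, fmk c d, (h.ne_pm).symm, h.ne_mr, h.ne_pr,
    by rw [trip]; ext t; simp; tauto, (h.mut_mid_r hbd).symm⟩

end Good

/-- decomposition of a sorted triple set into three arbitrary distinct elements -/
lemma set3_decomp {α : Type*} [LinearOrder α] {p m r x y z : α}
    (h1 : p < m) (h2 : m < r) (hxy : x ≠ y) (hxz : x ≠ z) (hyz : y ≠ z)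
    (hs : ({p, m, r} : Set α) = {x, y, z}) :
    (x = p ∧ ((y = m ∧ z = r) ∨ (y = r ∧ z = m))) ∨
    (x = m ∧ ((y = p ∧ z = r) ∨ (y = r ∧ z = p))) ∨
    (x = r ∧ ((y = p ∧ z = m) ∨ (y = m ∧ z = p))) := by
  have hpm : p ≠ m := h1.ne
  have hpr : p ≠ r := (h1.trans h2).ne
  have hmr : m ≠ r := h2.ne
  have hx : x = p ∨ x = m ∨ x = r := by
    have : x ∈ ({p, m, r} : Set α) := by rw [hs]; simp
    simpa using this
  have hy : y = p ∨ y = m ∨ y = r := by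
    have : y ∈ ({p, m, r} : Set α) := by rw [hs]; simp
    simpa using this
  have hz : z = p ∨ z = m ∨ z = r := by
    have : z ∈ ({p, m, r} : Set α) := by rw [hs]; simp
    simpa using this
  have hp : p = x ∨ p = y ∨ p = z := by
    have : p ∈ ({x, y, z} : Set α) := by rw [← hs]; simp
    simpa using this
  have hm : m = x ∨ m = y ∨ m = z := by
    have : m ∈ ({x, y, z} : Set α) := by rw [← hs]; simp
    simpa using this
  have hr : r = x ∨ r = y ∨ r = z := by
    have : r ∈ ({x, y, z} : Set α) := by rw [← hs]; simp
    simpa using this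
  clear hs h1 h2 hp hm hr
  rcases hx with rfl | rfl | rfl
  · refine Or.inl ⟨rfl, ?_⟩
    rcases hy with rfl | rfl | rfl
    · exact absurd rfl hxy
    · rcases hz with rfl | rfl | rfl
      · exact absurd rfl hxz
      · exact absurd rfl hyz
      · exact Or.inl ⟨rfl, rfl⟩
    · rcases hz with rfl | rfl | rfl
      · exact absurd rfl hxz
      · exact Or.inr ⟨rfl, rfl⟩
      · exact absurd rfl hyz
  · refine Or.inr (Or.inl ⟨rfl, ?_⟩)
    rcases hy with rfl | rfl | rfl
    · rcases hz with rfl | rfl | rfl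
      · exact absurd rfl hyz
      · exact absurd rfl hxz
      · exact Or.inl ⟨rfl, rfl⟩
    · exact absurd rfl hxy
    · rcases hz with rfl | rfl | rfl
      · exact Or.inr ⟨rfl, rfl⟩
      · exact absurd rfl hxz
      · exact absurd rfl hyz
  · refine Or.inr (Or.inr ⟨rfl, ?_⟩)
    rcases hy with rfl | rfl | rfl
    · rcases hz with rfl | rfl | rfl
      · exact absurd rfl hyz
      · exact Or.inl ⟨rfl, rfl⟩
      · exact absurd rfl hxz
    · rcases hz with rfl | rfl | rfl
      · exact Or.inr ⟨rfl, rfl⟩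
      · exact absurd rfl hyz
      · exact absurd rfl hxz
    · exact absurd rfl hxy

/-! ### Section 4 : classification of mutations, potential function -/

theorem mut_classify {a b c d : ℤ} (h : Good a b c d) {t : Set QInf}
    (hm : IsMutationOf (trip a b c d) t) :
    t = trip (a+c) (b+d) c d ∨ t = trip a b (a+c) (b+d) ∨
    (d < b ∧ t = trip (a-c) (b-d) c d) ∨ (b ≤ d ∧ t = trip a b (c-a) (d-b)) := by
  obtain ⟨x, y, z, hxy, hxz, hyz, hs, rfl⟩ := hm
  have hs' : ({fmk a b, fmk (a+c) (b+d), fmk c d} : Set QInf) = {x, y, z} := hs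
  rcases set3_decomp h.p_lt_m h.m_lt_r hxy hxz hyz hs' with
    ⟨rfl, ⟨rfl, rfl⟩ | ⟨rfl, rfl⟩⟩ | ⟨rfl, ⟨rfl, rfl⟩ | ⟨rfl, rfl⟩⟩ | ⟨rfl, ⟨rfl, rfl⟩ | ⟨rfl, rfl⟩⟩
  · exact Or.inl h.mut_min
  · exact Or.inl ((fareyMut_comm _ _ _).trans h.mut_min)
  · rcases le_or_gt b d with hbd | hbd
    · exact Or.inr (Or.inr (Or.inr ⟨hbd, h.mut_mid_r hbd⟩))
    · exact Or.inr (Or.inr (Or.inl ⟨hbd, h.mut_mid_l hbd⟩))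
  · rcases le_or_gt b d with hbd | hbd
    · exact Or.inr (Or.inr (Or.inr ⟨hbd, (fareyMut_comm _ _ _).trans (h.mut_mid_r hbd)⟩))
    · exact Or.inr (Or.inr (Or.inl ⟨hbd, (fareyMut_comm _ _ _).trans (h.mut_mid_l hbd)⟩))
  · exact Or.inr (Or.inl ((fareyMut_comm _ _ _).trans h.mut_max))
  · exact Or.inr (Or.inl h.mut_max)

/-- involutivity of mutation -/
theorem mut_symm {s t : Set QInf} (hs : IsFareyTriple s) (hm : IsMutationOf s t) :
    IsMutationOf t s := by
  obtain ⟨a, b, c, d, h, rfl⟩ := isFareyTriple_iff.mp hs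
  rcases mut_classify h hm with rfl | rfl | ⟨hbd, rfl⟩ | ⟨hbd, rfl⟩
  · have h2 : IsMutationOf (trip (a+c) (b+d) c d) (trip ((a+c)-c) ((b+d)-d) c d) :=
      h.goodN1.mutOf_mid_l (by linarith [h.bpos])
    have e : trip ((a+c)-c) ((b+d)-d) c d = trip a b c d := by
      congr 1 <;> ring
    rwa [e] at h2
  · have h2 : IsMutationOf (trip a b (a+c) (b+d)) (trip a b ((a+c)-a) ((b+d)-b)) :=
      h.goodN3.mutOf_mid_r (by linarith [h.dnn])
    have e : trip a b ((a+c)-a) ((b+d)-b) = trip a b c d := by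
      congr 1 <;> ring
    rwa [e] at h2
  · have h2 : IsMutationOf (trip (a-c) (b-d) c d) (trip ((a-c)+c) ((b-d)+d) c d) :=
      (h.goodN2l hbd).mutOf_min
    have e : trip ((a-c)+c) ((b-d)+d) c d = trip a b c d := by
      congr 1 <;> ring
    rwa [e] at h2
  · have h2 : IsMutationOf (trip a b (c-a) (d-b)) (trip a b (a+(c-a)) (b+(d-b))) :=
      (h.goodN2r hbd).mutOf_max
    have e : trip a b (a+(c-a)) (b+(d-b)) = trip a b c d := by
      congr 1 <;> ring
    rwa [e] at h2

/-- the quadratic form used as a potential -/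
def qf (a b : ℤ) : ℤ := a^2 - a*b + b^2

def F (x : QInf) : ℤ := qf (fnum x) (fden x)

noncomputable def phi (s : Set QInf) : ℤ := ∑ᶠ x ∈ s, F x

lemma phi_triple {x y z : QInf} (hxy : x ≠ y) (hxz : x ≠ z) (hyz : y ≠ z) :
    phi {x, y, z} = F x + F y + F z := by
  classical
  have e : ({x, y, z} : Set QInf) = (({x, y, z} : Finset QInf) : Set QInf) := by simp
  rw [phi, e, finsum_mem_coe_finset]
  rw [Finset.sum_insert (by simp [hxy, hxz]), Finset.sum_insert (by simp [hyz]),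
    Finset.sum_singleton]
  ring

lemma phi_trip {a b c d : ℤ} (h : Good a b c d) :
    phi (trip a b c d) = qf a b + qf (a+c) (b+d) + qf c d := by
  have e := phi_triple h.ne_pm h.ne_pr h.ne_mr
  rw [trip]
  rw [e, F, F, F, h.num_p, h.den_p, h.num_m, h.den_m, h.num_r, h.den_r]

namespace Good

variable {a b c d : ℤ} (h : Good a b c d)

include h

lemma keyid : (2*a*c + 2*b*d - a*d - b*c)^2 + 3 = 4 * (qf a b * qf c d) := by
  have e : 4 * (qf a b * qf c d) - (2*a*c + 2*b*d - a*d - b*c)^2 = 3*(c*b - a*d)^2 := by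
    unfold qf; ring
  rw [h.det] at e
  linarith

lemma fu_pos : 1 ≤ qf a b := by
  have hb := h.bpos
  have h4 : 4 * qf a b = (2*a-b)^2 + 3*b^2 := by unfold qf; ring
  have hb2 : 1 ≤ b^2 := by nlinarith
  have h3 : 3 ≤ 4 * qf a b := by nlinarith [sq_nonneg (2*a-b)]
  set q := qf a b
  omega

lemma fv_pos : 1 ≤ qf c d := by
  rcases eq_or_ne d 0 with rfl | hd
  · obtain ⟨hc, hb⟩ := h.cd_of_d_eq_zero rfl
    subst hc
    norm_num [qf]
  · have hd0 := h.dnn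
    have hd1 : 1 ≤ d := by omega
    have h4 : 4 * qf c d = (2*c-d)^2 + 3*d^2 := by unfold qf; ring
    have hd2 : 1 ≤ d^2 := by nlinarith
    have h3 : 3 ≤ 4 * qf c d := by nlinarith [sq_nonneg (2*c-d)]
    set q := qf c d
    omega

lemma dphi1 : phi (trip (a+c) (b+d) c d) - phi (trip a b c d) =
    2*(2*a*c + 2*b*d - a*d - b*c) + 4 * qf c d := by
  rw [phi_trip h.goodN1, phi_trip h]
  unfold qf; ring

lemma dphi3 : phi (trip a b (a+c) (b+d)) - phi (trip a b c d) =
    2*(2*a*c + 2*b*d - a*d - b*c) + 4 * qf a b := by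
  rw [phi_trip h.goodN3, phi_trip h]
  unfold qf; ring

lemma dphi2l (hbd : d < b) : phi (trip (a-c) (b-d) c d) - phi (trip a b c d) =
    -(2*(2*a*c + 2*b*d - a*d - b*c)) := by
  rw [phi_trip (h.goodN2l hbd), phi_trip h]
  unfold qf; ring

lemma dphi2r (hbd : b ≤ d) : phi (trip a b (c-a) (d-b)) - phi (trip a b c d) =
    -(2*(2*a*c + 2*b*d - a*d - b*c)) := by
  rw [phi_trip (h.goodN2r hbd), phi_trip h]
  unfold qf; ring

end Good

/-! ### Section 5 : decision lemmas for the potential -/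

namespace Good

variable {a b c d : ℤ} (h : Good a b c d)

include h

lemma beta_ne_zero : 2*a*c + 2*b*d - a*d - b*c ≠ 0 := by
  intro heq
  have hk := h.keyid
  have h3 : (3:ℤ) = 4 * (qf a b * qf c d) := by
    rw [← hk]
    nlinarith [heq]
  have : (4:ℤ) ∣ 3 := ⟨qf a b * qf c d, h3⟩
  norm_num at this

lemma n1_ne_zero : 2*(2*a*c + 2*b*d - a*d - b*c) + 4 * qf c d ≠ 0 := by
  intro heq
  have hk := h.keyid
  set B := 2*a*c + 2*b*d - a*d - b*c with hB
  have e' : B = -(2 * qf c d) := by linarith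
  have h3 : (3:ℤ) = 4 * (qf a b * qf c d - qf c d * qf c d) := by
    rw [e'] at hk
    nlinarith [hk]
  have : (4:ℤ) ∣ 3 := ⟨_, h3⟩
  norm_num at this

lemma n3_ne_zero : 2*(2*a*c + 2*b*d - a*d - b*c) + 4 * qf a b ≠ 0 := by
  intro heq
  have hk := h.keyid
  set B := 2*a*c + 2*b*d - a*d - b*c with hB
  have e' : B = -(2 * qf a b) := by linarith
  have h3 : (3:ℤ) = 4 * (qf a b * qf c d - qf a b * qf a b) := by
    rw [e'] at hk
    nlinarith [hk]
  have : (4:ℤ) ∣ 3 := ⟨_, h3⟩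
  norm_num at this

/-- not both outer mutations can decrease the potential -/
lemma not_both_outer (h1 : 2*(2*a*c + 2*b*d - a*d - b*c) + 4 * qf c d < 0)
    (h3 : 2*(2*a*c + 2*b*d - a*d - b*c) + 4 * qf a b < 0) : False := by
  have hk := h.keyid
  have hu := h.fu_pos
  have hv := h.fv_pos
  set B := 2*a*c + 2*b*d - a*d - b*c with hB
  set u := qf a b
  set v := qf c d
  have e1 : 2*v + 1 ≤ -B := by omega
  have e2 : 2*u + 1 ≤ -B := by omega
  have e3 : (2*v+1) * (2*u+1) ≤ (-B) * (-B) :=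
    mul_le_mul e1 e2 (by linarith) (by linarith)
  nlinarith [e3, hk]


end Good

/-- final enumeration for the base triple -/
lemma solve_base (a b c d : ℤ) (hb : 1 ≤ b) (hd : 0 ≤ d) (hdet : c*b - a*d = 1)
    (hu1 : a^2 - a*b + b^2 = 1) (hv1 : c^2 - c*d + d^2 = 1)
    (hBm1 : 2*a*c + 2*b*d - a*d - b*c = -1) : a = 0 ∧ b = 1 ∧ c = 1 ∧ d = 0 := by
  have hbsq : b^2 ≤ 1 := by nlinarith [sq_nonneg (2*a - b)]
  have hble : b ≤ 1 := by nlinarith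
  have hbb : b = 1 := by omega
  subst hbb
  have ha' : a * (a - 1) = 0 := by nlinarith
  have ha : a = 0 ∨ a = 1 := by
    rcases mul_eq_zero.mp ha' with hf | hf <;> omega
  have hdsq : d^2 ≤ 1 := by nlinarith [sq_nonneg (2*c - d)]
  have hdle : d ≤ 1 := by nlinarith
  have hdd : d = 0 ∨ d = 1 := by omega
  rcases hdd with rfl | rfl
  · have hc : c = 1 := by omega
    subst hc
    refine ⟨by linarith, rfl, rfl, rfl⟩
  · exfalso
    have hc' : c * (c - 1) = 0 := by nlinarith
    have hc : c = 0 ∨ c = 1 := by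
      rcases mul_eq_zero.mp hc' with hf | hf <;> omega
    have hca : c - a = 1 := by linarith
    rcases ha with rfl | rfl <;> rcases hc with rfl | rfl <;> omega

namespace Good
variable {a b c d : ℤ} (h : Good a b c d)
include h

/-- if no mutation decreases the potential, the triple is the base triple -/
lemma base_char (hn2 : ¬ (0 < 2*a*c + 2*b*d - a*d - b*c))
    (hn1 : ¬ (2*(2*a*c + 2*b*d - a*d - b*c) + 4 * qf c d < 0))
    (hn3 : ¬ (2*(2*a*c + 2*b*d - a*d - b*c) + 4 * qf a b < 0)) :
    a = 0 ∧ b = 1 ∧ c = 1 ∧ d = 0 := by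
  have hk := h.keyid
  have hu := h.fu_pos
  have hv := h.fv_pos
  have hz := h.beta_ne_zero
  have hz1 := h.n1_ne_zero
  have hz3 := h.n3_ne_zero
  have hdet := h.det
  have hbpos := h.bpos
  have hdnn := h.dnn
  set B := 2*a*c + 2*b*d - a*d - b*c with hB
  set u := qf a b with huu
  set v := qf c d with hvv
  push_neg at hn2 hn1 hn3
  have hb1 : B ≤ -1 := by omega
  have hb2 : -(2*v) + 1 ≤ B := by omega
  have hb3 : -(2*u) + 1 ≤ B := by omega
  -- |B| ≤ 2u - 1 and |B| ≤ 2v - 1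
  have sq2 : B * B ≤ (2*v - 1) * (2*v - 1) := by nlinarith [hb1, hb2]
  have sq3 : B * B ≤ (2*u - 1) * (2*u - 1) := by nlinarith [hb1, hb3]
  have hle1 : u * (v - u + 1) ≤ 1 := by nlinarith [sq3, hk]
  have hle2 : v * (u - v + 1) ≤ 1 := by nlinarith [sq2, hk]
  have hfuv : v ≤ u := by
    by_contra hh
    push_neg at hh
    have e1 : 2 ≤ v - u + 1 := by omega
    have e2 : u * 2 ≤ u * (v - u + 1) := mul_le_mul_of_nonneg_left e1 (by linarith)
    linarith
  have hfvu : u ≤ v := by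
    by_contra hh
    push_neg at hh
    have e1 : 2 ≤ u - v + 1 := by omega
    have e2 : v * 2 ≤ v * (u - v + 1) := mul_le_mul_of_nonneg_left e1 (by linarith)
    linarith
  have huv : u = v := le_antisymm hfvu hfuv
  have hu1 : u = 1 := by
    have : u * 1 ≤ 1 := by rw [← huv] at hle1; simpa using hle1
    omega
  have hv1 : v = 1 := by omega
  have hBsq : B * B = 1 := by
    have : B^2 + 3 = 4 := by rw [hk, hu1, hv1]; ring
    nlinarith [this]
  have hBm1 : B = -1 := by
    have hf : (B - 1) * (B + 1) = 0 := by linarith [hBsq]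
    rcases mul_eq_zero.mp hf with hf | hf <;> omega
  have hu' : qf a b = 1 := hu1
  have hv' : qf c d = 1 := hv1
  unfold qf at hu' hv'
  rw [hB] at hBm1
  exact solve_base a b c d hbpos hdnn hdet hu' hv' hBm1

end Good

/-! ### Section 6 : the exchange graph -/

def vtx {a b c d : ℤ} (h : Good a b c d) : {s : Set QInf // IsFareyTriple s} :=
  ⟨trip a b c d, isFareyTriple_iff.mpr ⟨a, b, c, d, h, rfl⟩⟩

def midTrip (a b c d : ℤ) : Set QInf :=
  if b ≤ d then trip a b (c-a) (d-b) else trip (a-c) (b-d) c d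

namespace Good

variable {a b c d : ℤ} (h : Good a b c d)

include h

lemma midTrip_isTriple : IsFareyTriple (midTrip a b c d) := by
  rw [midTrip]
  split_ifs with hbd
  · exact isFareyTriple_iff.mpr ⟨_, _, _, _, h.goodN2r hbd, rfl⟩
  · exact isFareyTriple_iff.mpr ⟨_, _, _, _, h.goodN2l (by omega), rfl⟩

lemma mutOf_mid : IsMutationOf (trip a b c d) (midTrip a b c d) := by
  rw [midTrip]
  split_ifs with hbd
  · exact h.mutOf_mid_r hbd
  · exact h.mutOf_mid_l (by omega)

lemma dphi_mid : phi (midTrip a b c d) - phi (trip a b c d) =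
    -(2*(2*a*c + 2*b*d - a*d - b*c)) := by
  rw [midTrip]
  split_ifs with hbd
  · exact h.dphi2r hbd
  · exact h.dphi2l (by omega)

lemma n1_ne_s : trip (a+c) (b+d) c d ≠ trip a b c d := by
  intro e
  obtain ⟨e1, e2, e3, e4⟩ := trip_inj h.goodN1 h e
  have hc : c = 0 := by omega
  have hd : d = 0 := by omega
  have := h.det
  rw [hc, hd] at this
  simp at this

lemma n3_ne_s : trip a b (a+c) (b+d) ≠ trip a b c d := by
  intro e
  obtain ⟨e1, e2, e3, e4⟩ := trip_inj h.goodN3 h e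
  have := h.bpos
  omega

lemma mid_ne_s : midTrip a b c d ≠ trip a b c d := by
  rw [midTrip]
  split_ifs with hbd
  · intro e
    obtain ⟨e1, e2, e3, e4⟩ := trip_inj (h.goodN2r hbd) h e
    have := h.bpos
    omega
  · intro e
    obtain ⟨e1, e2, e3, e4⟩ := trip_inj (h.goodN2l (by omega)) h e
    have hc : c = 0 := by omega
    have hd : d = 0 := by omega
    have := h.det
    rw [hc, hd] at this
    simp at this

lemma n1_ne_n3 : trip (a+c) (b+d) c d ≠ trip a b (a+c) (b+d) := by
  intro e
  obtain ⟨e1, e2, e3, e4⟩ := trip_inj h.goodN1 h.goodN3 e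
  have := h.bpos
  have := h.dnn
  omega

lemma n1_ne_mid : trip (a+c) (b+d) c d ≠ midTrip a b c d := by
  rw [midTrip]
  split_ifs with hbd
  · intro e
    obtain ⟨e1, e2, e3, e4⟩ := trip_inj h.goodN1 (h.goodN2r hbd) e
    have := h.bpos
    omega
  · intro e
    obtain ⟨e1, e2, e3, e4⟩ := trip_inj h.goodN1 (h.goodN2l (by omega)) e
    have hc : c = 0 := by omega
    have hd : d = 0 := by omega
    have := h.det
    rw [hc, hd] at this
    simp at this

lemma n3_ne_mid : trip a b (a+c) (b+d) ≠ midTrip a b c d := by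
  rw [midTrip]
  split_ifs with hbd
  · intro e
    obtain ⟨e1, e2, e3, e4⟩ := trip_inj h.goodN3 (h.goodN2r hbd) e
    have := h.bpos
    omega
  · intro e
    obtain ⟨e1, e2, e3, e4⟩ := trip_inj h.goodN3 (h.goodN2l (by omega)) e
    have hd : d = 0 := by omega
    have hc : c = 0 := by omega
    have := h.det
    rw [hc, hd] at this
    simp at this

lemma adj_iff (w : {s : Set QInf // IsFareyTriple s}) :
    fareyExchangeGraph.Adj (vtx h) w ↔
      w.val = trip (a+c) (b+d) c d ∨ w.val = trip a b (a+c) (b+d) ∨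
        w.val = midTrip a b c d := by
  constructor
  · rintro ⟨hne, hmut | hmut⟩
    · have := mut_classify h hmut
      rcases this with e | e | ⟨hbd, e⟩ | ⟨hbd, e⟩
      · exact Or.inl e
      · exact Or.inr (Or.inl e)
      · refine Or.inr (Or.inr ?_)
        rw [midTrip, if_neg (by omega)]
        exact e
      · refine Or.inr (Or.inr ?_)
        rw [midTrip, if_pos hbd]
        exact e
    · have hmut' := mut_symm w.2 hmut
      have := mut_classify h hmut'
      rcases this with e | e | ⟨hbd, e⟩ | ⟨hbd, e⟩
      · exact Or.inl e
      · exact Or.inr (Or.inl e)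
      · refine Or.inr (Or.inr ?_)
        rw [midTrip, if_neg (by omega)]
        exact e
      · refine Or.inr (Or.inr ?_)
        rw [midTrip, if_pos hbd]
        exact e
  · rintro (e | e | e)
    · exact ⟨fun hh => h.n1_ne_s (by rw [← e]; exact (congrArg Subtype.val hh).symm), Or.inl (e ▸ h.mutOf_min)⟩
    · exact ⟨fun hh => h.n3_ne_s (by rw [← e]; exact (congrArg Subtype.val hh).symm), Or.inl (e ▸ h.mutOf_max)⟩
    · exact ⟨fun hh => h.mid_ne_s (by rw [← e]; exact (congrArg Subtype.val hh).symm), Or.inl (e ▸ h.mutOf_mid)⟩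

lemma neighborSet_eq :
    fareyExchangeGraph.neighborSet (vtx h) =
      {vtx h.goodN1, vtx h.goodN3, ⟨midTrip a b c d, h.midTrip_isTriple⟩} := by
  ext w
  rw [SimpleGraph.mem_neighborSet, h.adj_iff w]
  simp only [Set.mem_insert_iff, Set.mem_singleton_iff]
  constructor
  · rintro (e | e | e)
    · exact Or.inl (Subtype.ext e)
    · exact Or.inr (Or.inl (Subtype.ext e))
    · exact Or.inr (Or.inr (Subtype.ext e))
  · rintro (rfl | rfl | rfl)
    · exact Or.inl rfl
    · exact Or.inr (Or.inl rfl)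
    · exact Or.inr (Or.inr rfl)

end Good

theorem degree_three (v : {s : Set QInf // IsFareyTriple s}) :
    (fareyExchangeGraph.neighborSet v).ncard = 3 := by
  obtain ⟨a, b, c, d, h, hv⟩ := isFareyTriple_iff.mp v.2
  have hveq : v = vtx h := Subtype.ext hv
  rw [hveq, h.neighborSet_eq]
  apply Set.ncard_eq_three.mpr
  refine ⟨_, _, _, ?_, ?_, ?_, rfl⟩
  · exact fun e => h.n1_ne_n3 (congrArg Subtype.val e)
  · exact fun e => h.n1_ne_mid (congrArg Subtype.val e)
  · exact fun e => h.n3_ne_mid (congrArg Subtype.val e)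

/-! ### Section 6b : connectivity -/

lemma good_base : Good 0 1 1 0 := ⟨le_refl 1, le_refl 0, by norm_num⟩

noncomputable def basevtx : {s : Set QInf // IsFareyTriple s} := vtx good_base

lemma Good.phi_pos {a b c d : ℤ} (h : Good a b c d) : 3 ≤ phi (trip a b c d) := by
  rw [phi_trip h]
  have h1 := h.fu_pos
  have h2 := h.fv_pos
  have h3 := h.goodN1.fu_pos
  linarith

theorem reach_base : ∀ (n : ℕ) (v : {s : Set QInf // IsFareyTriple s}),
    (phi v.val).toNat = n → fareyExchangeGraph.Reachable basevtx v := by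
  intro n
  induction n using Nat.strong_induction_on with
  | _ n ih =>
    intro v hn
    obtain ⟨a, b, c, d, h, hv⟩ := isFareyTriple_iff.mp v.2
    have hveq : v = vtx h := Subtype.ext hv
    have hphiv : phi v.val = phi (trip a b c d) := by rw [hveq]; rfl
    by_cases h2 : 0 < 2*a*c + 2*b*d - a*d - b*c
    · set w : {s : Set QInf // IsFareyTriple s} := ⟨midTrip a b c d, h.midTrip_isTriple⟩ with hw
      have hadj : fareyExchangeGraph.Adj (vtx h) w := (h.adj_iff w).mpr (Or.inr (Or.inr rfl))
      have hdiff := h.dphi_mid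
      have hdec : phi w.val < phi v.val := by
        rw [hphiv]
        have : phi w.val = phi (midTrip a b c d) := rfl
        rw [this]
        linarith
      have hpos : 0 ≤ phi w.val := by
        have : phi w.val = phi (midTrip a b c d) := rfl
        rw [this, midTrip]
        split_ifs with hbd
        · linarith [(h.goodN2r hbd).phi_pos]
        · linarith [(h.goodN2l (by omega)).phi_pos]
      have hlt : (phi w.val).toNat < n := by omega
      exact (ih _ hlt w rfl).trans (hveq ▸ hadj.symm.reachable)
    · by_cases h1 : 2*(2*a*c + 2*b*d - a*d - b*c) + 4 * qf c d < 0
      · set w : {s : Set QInf // IsFareyTriple s} := vtx h.goodN1 with hw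
        have hadj : fareyExchangeGraph.Adj (vtx h) w := (h.adj_iff w).mpr (Or.inl rfl)
        have hdiff := h.dphi1
        have hdec : phi w.val < phi v.val := by
          rw [hphiv]
          have : phi w.val = phi (trip (a+c) (b+d) c d) := rfl
          rw [this]
          linarith
        have hpos : 0 ≤ phi w.val := by
          have : phi w.val = phi (trip (a+c) (b+d) c d) := rfl
          rw [this]
          linarith [h.goodN1.phi_pos]
        have hlt : (phi w.val).toNat < n := by omega
        exact (ih _ hlt w rfl).trans (hveq ▸ hadj.symm.reachable)
      · by_cases h3 : 2*(2*a*c + 2*b*d - a*d - b*c) + 4 * qf a b < 0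
        · set w : {s : Set QInf // IsFareyTriple s} := vtx h.goodN3 with hw
          have hadj : fareyExchangeGraph.Adj (vtx h) w :=
            (h.adj_iff w).mpr (Or.inr (Or.inl rfl))
          have hdiff := h.dphi3
          have hdec : phi w.val < phi v.val := by
            rw [hphiv]
            have : phi w.val = phi (trip a b (a+c) (b+d)) := rfl
            rw [this]
            linarith
          have hpos : 0 ≤ phi w.val := by
            have : phi w.val = phi (trip a b (a+c) (b+d)) := rfl
            rw [this]
            linarith [h.goodN3.phi_pos]
          have hlt : (phi w.val).toNat < n := by omega
          exact (ih _ hlt w rfl).trans (hveq ▸ hadj.symm.reachable)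
        · obtain ⟨ha, hb, hc, hd⟩ := h.base_char h2 h1 h3
          subst ha; subst hb; subst hc; subst hd
          have : v = basevtx := by
            rw [hveq]
            exact Subtype.ext rfl
          rw [this]
theorem farey_connected : fareyExchangeGraph.Connected := by
  rw [SimpleGraph.connected_iff]
  refine ⟨fun u v => ?_, ⟨basevtx⟩⟩
  exact (reach_base _ u rfl).symm.trans (reach_base _ v rfl)

/-! ### Section 6c : acyclicity -/

lemma Good.adj_phi_ne {a b c d : ℤ} (h : Good a b c d)
    {w : {s : Set QInf // IsFareyTriple s}} (hadj : fareyExchangeGraph.Adj (vtx h) w) :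
    phi w.val ≠ phi (trip a b c d) := by
  rcases (h.adj_iff w).mp hadj with e | e | e <;> rw [e]
  · have hd := h.dphi1
    have hz := h.n1_ne_zero
    intro hh; rw [hh] at hd; omega
  · have hd := h.dphi3
    have hz := h.n3_ne_zero
    intro hh; rw [hh] at hd; omega
  · have hd := h.dphi_mid
    have hz := h.beta_ne_zero
    intro hh; rw [hh] at hd; omega

lemma Good.dec_unique {a b c d : ℤ} (h : Good a b c d)
    {w1 w2 : {s : Set QInf // IsFareyTriple s}}
    (a1 : fareyExchangeGraph.Adj (vtx h) w1) (a2 : fareyExchangeGraph.Adj (vtx h) w2)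
    (d1 : phi w1.val < phi (trip a b c d)) (d2 : phi w2.val < phi (trip a b c d)) :
    w1 = w2 := by
  have hfu := h.fu_pos
  have hfv := h.fv_pos
  have e1 := (h.adj_iff w1).mp a1
  have e2 := (h.adj_iff w2).mp a2
  have hd1 := h.dphi1
  have hd3 := h.dphi3
  have hdm := h.dphi_mid
  have hn1 : ¬ (phi (trip (a+c) (b+d) c d) < phi (trip a b c d)) ∨
      ¬ (phi (trip a b (a+c) (b+d)) < phi (trip a b c d)) := by
    by_contra hh
    push_neg at hh
    exact h.not_both_outer (by linarith [hh.1]) (by linarith [hh.2])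
  have hmn1 : ¬ (phi (midTrip a b c d) < phi (trip a b c d)) ∨
      ¬ (phi (trip (a+c) (b+d) c d) < phi (trip a b c d)) := by
    by_contra hh
    push_neg at hh
    have hb1 : 0 < 2*a*c + 2*b*d - a*d - b*c := by linarith [hh.1]
    linarith [hh.2]
  have hmn3 : ¬ (phi (midTrip a b c d) < phi (trip a b c d)) ∨
      ¬ (phi (trip a b (a+c) (b+d)) < phi (trip a b c d)) := by
    by_contra hh
    push_neg at hh
    have hb1 : 0 < 2*a*c + 2*b*d - a*d - b*c := by linarith [hh.1]
    linarith [hh.2]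
  rcases e1 with f1 | f1 | f1 <;> rcases e2 with f2 | f2 | f2 <;>
    rw [f1] at d1 <;> rw [f2] at d2
  · exact Subtype.ext (f1.trans f2.symm)
  · exact absurd (Or.elim hn1 (fun hh => absurd d1 hh) id) (fun hh => hh d2)
  · exact absurd (Or.elim hmn1 (fun hh => absurd d2 hh) id) (fun hh => hh d1)
  · exact absurd (Or.elim hn1 (fun hh => absurd d2 hh) id) (fun hh => hh d1)
  · exact Subtype.ext (f1.trans f2.symm)
  · exact absurd (Or.elim hmn3 (fun hh => absurd d2 hh) id) (fun hh => hh d1)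
  · exact absurd (Or.elim hmn1 (fun hh => absurd d1 hh) id) (fun hh => hh d2)
  · exact absurd (Or.elim hmn3 (fun hh => absurd d1 hh) id) (fun hh => hh d2)
  · exact Subtype.ext (f1.trans f2.symm)

lemma getVert_eq_support_getElem {V : Type*} {G : SimpleGraph V} {u v : V} (p : G.Walk u v)
    {i : ℕ} (hi : i ≤ p.length) :
    p.getVert i = p.support[i]'(by rw [SimpleGraph.Walk.length_support]; omega) := by
  induction p generalizing i with
  | nil =>
      have : i = 0 := by simpa using hi
      subst this
      simp
  | cons h q ih =>
      cases i with
      | zero => simp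
      | succ m =>
          simp only [SimpleGraph.Walk.support_cons, SimpleGraph.Walk.getVert_cons_succ,
            List.getElem_cons_succ]
          exact ih (by simpa using hi)

/-- bridge from `getVert` to the support tail -/
lemma getVert_succ_eq_tail_getElem {V : Type*} {G : SimpleGraph V} {u v : V} (p : G.Walk u v)
    {i : ℕ} (hi : i < p.length) :
    p.getVert (i+1) = p.support.tail[i]'(by
      rw [List.length_tail, SimpleGraph.Walk.length_support]; omega) := by
  cases p with
  | nil => exact absurd hi (by simp)
  | cons h q =>
      simp only [SimpleGraph.Walk.getVert_cons_succ, SimpleGraph.Walk.support_cons,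
        List.tail_cons]
      exact getVert_eq_support_getElem q (by
        have : (SimpleGraph.Walk.cons h q).length = q.length + 1 := by simp
        omega)

/-- in a cycle, the two neighbours of the base point on the cycle are distinct -/
lemma cycle_neighbors {V : Type*} {G : SimpleGraph V} {u : V} {c : G.Walk u u}
    (hc : c.IsCycle) :
    ∃ x y, x ≠ y ∧ G.Adj u x ∧ G.Adj u y ∧ x ∈ c.support ∧ y ∈ c.support := by
  have hlen := hc.three_le_length
  have hnd : c.support.tail.Nodup := hc.2
  have htl : c.support.tail.length = c.length := by
    rw [List.length_tail, SimpleGraph.Walk.length_support]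
    omega
  refine ⟨c.getVert 1, c.getVert (c.length - 1), ?_, ?_, ?_, ?_, ?_⟩
  · intro heq
    have hx' : c.getVert 1 = c.support.tail[0]'(by omega) := by
      have := getVert_succ_eq_tail_getElem c (i := 0) (by omega)
      simpa using this
    have e : c.length - 1 = c.length - 2 + 1 := by omega
    have hy' : c.getVert (c.length - 1) = c.support.tail[c.length - 2]'(by omega) := by
      have h2 := getVert_succ_eq_tail_getElem c (i := c.length - 2) (by omega)
      rw [← e] at h2
      exact h2
    rw [hx', hy'] at heq
    have := (List.Nodup.getElem_inj_iff hnd).mp heq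
    omega
  · have := c.adj_getVert_succ (i := 0) (by omega)
    simpa using this
  · have := c.adj_getVert_succ (i := c.length - 1) (by omega)
    have e : c.length - 1 + 1 = c.length := by omega
    rw [e, SimpleGraph.Walk.getVert_length] at this
    exact this.symm
  · rw [SimpleGraph.Walk.mem_support_iff_exists_getVert]
    exact ⟨1, rfl, by omega⟩
  · rw [SimpleGraph.Walk.mem_support_iff_exists_getVert]
    exact ⟨c.length - 1, rfl, by omega⟩

theorem farey_acyclic : fareyExchangeGraph.IsAcyclic := by
  classical
  intro v c hc
  obtain ⟨u, hu, hmax⟩ := Finset.exists_max_image c.support.toFinset (fun t => phi t.val)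
    ⟨v, by rw [List.mem_toFinset]; exact c.start_mem_support⟩
  rw [List.mem_toFinset] at hu
  have hc' : (c.rotate u hu).IsCycle := hc.rotate hu
  obtain ⟨x, y, hxy, hax, hay, hxs, hys⟩ := cycle_neighbors hc'
  have hmem : ∀ t, t ∈ (c.rotate u hu).support → t ∈ c.support := by
    intro t ht
    have hrot := c.support_rotate u hu
    have hsc : (c.rotate u hu).support = u :: (c.rotate u hu).support.tail := by
      rw [← SimpleGraph.Walk.support_eq_cons]
    rw [hsc] at ht
    rcases List.mem_cons.mp ht with rfl | ht
    · exact hu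
    · have := hrot.mem_iff.mp ht
      have hsc2 : c.support = v :: c.support.tail := by
        rw [← SimpleGraph.Walk.support_eq_cons]
      rw [hsc2]
      exact List.mem_cons_of_mem _ this
  obtain ⟨a, b, c', d, h, hueq⟩ := isFareyTriple_iff.mp u.2
  have huv : u = vtx h := Subtype.ext hueq
  have hphiu : phi u.val = phi (trip a b c' d) := by rw [huv]; rfl
  have hax' : fareyExchangeGraph.Adj (vtx h) x := huv ▸ hax
  have hay' : fareyExchangeGraph.Adj (vtx h) y := huv ▸ hay
  have hdx : phi x.val < phi (trip a b c' d) := by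
    have hle : phi x.val ≤ phi u.val :=
      hmax x (List.mem_toFinset.mpr (hmem x hxs))
    have hne : phi x.val ≠ phi (trip a b c' d) := h.adj_phi_ne hax'
    rw [hphiu] at hle
    omega
  have hdy : phi y.val < phi (trip a b c' d) := by
    have hle : phi y.val ≤ phi u.val :=
      hmax y (List.mem_toFinset.mpr (hmem y hys))
    have hne : phi y.val ≠ phi (trip a b c' d) := h.adj_phi_ne hay'
    rw [hphiu] at hle
    omega
  exact hxy (h.dec_unique hax' hay' hdx hdy)

/-! ### Section 7 : abstract counting in a 3-regular tree -/

section TreeCount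

variable {V' : Type*} {G : SimpleGraph V'}

lemma exists_path_dist (hconn : G.Connected) (v w : V') :
    ∃ p : G.Walk v w, p.IsPath ∧ p.length = G.dist v w := by
  classical
  obtain ⟨q, hq⟩ := hconn.exists_walk_length_eq_dist v w
  refine ⟨q.bypass, SimpleGraph.Walk.bypass_isPath q, le_antisymm ?_ (SimpleGraph.dist_le _)⟩
  exact le_trans (SimpleGraph.Walk.length_bypass_le q) hq.le

lemma path_length_eq (hconn : G.Connected) (hac : G.IsAcyclic) {v w : V'}
    (p : G.Walk v w) (hp : p.IsPath) : p.length = G.dist v w := by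
  obtain ⟨q, hq, hqlen⟩ := exists_path_dist hconn v w
  have he : p = q := congrArg Subtype.val (hac.path_unique ⟨p, hp⟩ ⟨q, hq⟩)
  rw [he, hqlen]

lemma adj_dist_ne (hconn : G.Connected) (hac : G.IsAcyclic) {v w w' : V'}
    (hadj : G.Adj w w') : G.dist v w ≠ G.dist v w' := by
  classical
  intro heq
  obtain ⟨p, hp, hplen⟩ := exists_path_dist hconn v w
  by_cases hmem : w' ∈ p.support
  · have ht := hp.takeUntil hmem
    have hlen2 : (p.takeUntil w' hmem).length = G.dist v w' :=
      path_length_eq hconn hac _ ht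
    have hspec := p.take_spec hmem
    have hlenapp : (p.takeUntil w' hmem).length + (p.dropUntil w' hmem).length = p.length := by
      rw [← SimpleGraph.Walk.length_append, hspec]
    have hdrop0 : (p.dropUntil w' hmem).length = 0 := by omega
    have hww : w' = w := SimpleGraph.Walk.eq_of_length_eq_zero hdrop0
    exact G.loopless.irrefl w (hww ▸ hadj)
  · have hpath2 : (p.concat hadj).IsPath := by
      rw [← SimpleGraph.Walk.isPath_reverse_iff, SimpleGraph.Walk.reverse_concat]
      exact SimpleGraph.Walk.IsPath.cons hp.reverse
        (by rwa [SimpleGraph.Walk.support_reverse, List.mem_reverse])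
    have hc := path_length_eq hconn hac _ hpath2
    rw [SimpleGraph.Walk.length_concat] at hc
    omega

lemma exists_parent (hconn : G.Connected) {v w : V'} {k : ℕ}
    (hd : G.dist v w = k + 1) : ∃ u, G.Adj u w ∧ G.dist v u = k := by
  classical
  obtain ⟨p, hp, hplen⟩ := exists_path_dist hconn v w
  have hrl : p.reverse.length = k + 1 := by rw [SimpleGraph.Walk.length_reverse, hplen, hd]
  have hnil : ¬ p.reverse.Nil := by
    rw [SimpleGraph.Walk.nil_iff_length_eq, hrl]
    omega
  refine ⟨p.reverse.getVert 1, ?_, ?_⟩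
  · have := p.reverse.adj_getVert_succ (i := 0) (by omega)
    rw [SimpleGraph.Walk.getVert_zero] at this
    exact this.symm
  · have htail := SimpleGraph.Walk.length_tail_add_one hnil
    have hle : G.dist v (p.reverse.getVert 1) ≤ k := by
      have hh := SimpleGraph.dist_le (p.reverse.tail).reverse
      rw [SimpleGraph.Walk.length_reverse] at hh
      change G.dist v (p.reverse.getVert 1) ≤ _ at hh
      omega
    have hge : k ≤ G.dist v (p.reverse.getVert 1) := by
      have htri := hconn.dist_triangle (u := v) (v := p.reverse.getVert 1) (w := w)
      have hadj : G.Adj (p.reverse.getVert 1) w := by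
        have := p.reverse.adj_getVert_succ (i := 0) (by omega)
        rw [SimpleGraph.Walk.getVert_zero] at this
        exact this.symm
      have hdu : G.dist (p.reverse.getVert 1) w = 1 :=
        SimpleGraph.dist_eq_one_iff_adj.mpr hadj
      omega
    omega

lemma parent_unique (hconn : G.Connected) (hac : G.IsAcyclic) {v w u1 u2 : V'} {k : ℕ}
    (ha1 : G.Adj u1 w) (hd1 : G.dist v u1 = k) (ha2 : G.Adj u2 w) (hd2 : G.dist v u2 = k)
    (hd : G.dist v w = k + 1) : u1 = u2 := by
  classical
  obtain ⟨p1, hp1, hl1⟩ := exists_path_dist hconn v u1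
  obtain ⟨p2, hp2, hl2⟩ := exists_path_dist hconn v u2
  have hw1 : w ∉ p1.support := by
    intro hmem
    have hlen := path_length_eq hconn hac _ (hp1.takeUntil hmem)
    have hle := p1.length_takeUntil_le hmem
    omega
  have hw2 : w ∉ p2.support := by
    intro hmem
    have hlen := path_length_eq hconn hac _ (hp2.takeUntil hmem)
    have hle := p2.length_takeUntil_le hmem
    omega
  have hq1 : (p1.concat ha1).IsPath := by
    rw [← SimpleGraph.Walk.isPath_reverse_iff, SimpleGraph.Walk.reverse_concat]
    exact SimpleGraph.Walk.IsPath.cons hp1.reverse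
      (by rwa [SimpleGraph.Walk.support_reverse, List.mem_reverse])
  have hq2 : (p2.concat ha2).IsPath := by
    rw [← SimpleGraph.Walk.isPath_reverse_iff, SimpleGraph.Walk.reverse_concat]
    exact SimpleGraph.Walk.IsPath.cons hp2.reverse
      (by rwa [SimpleGraph.Walk.support_reverse, List.mem_reverse])
  have hq : p1.concat ha1 = p2.concat ha2 :=
    congrArg Subtype.val (hac.path_unique ⟨p1.concat ha1, hq1⟩ ⟨p2.concat ha2, hq2⟩)
  have hsupp := congrArg SimpleGraph.Walk.support hq
  rw [SimpleGraph.Walk.support_concat, SimpleGraph.Walk.support_concat] at hsupp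
  have hs : p1.support = p2.support := List.append_cancel_right hsupp
  have g1 := SimpleGraph.Walk.getLast_support p1
  have g2 := SimpleGraph.Walk.getLast_support p2
  have e1 : p1.support.getLast? = some u1 := by
    rw [List.getLast?_eq_getLast (SimpleGraph.Walk.support_ne_nil p1), g1]
  have e2 : p2.support.getLast? = some u2 := by
    rw [List.getLast?_eq_getLast (SimpleGraph.Walk.support_ne_nil p2), g2]
  rw [hs, e2] at e1
  exact (Option.some_injective _ e1).symm

lemma nbr_finite (hreg : ∀ u : V', (G.neighborSet u).ncard = 3) (u : V') :
    (G.neighborSet u).Finite := by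
  by_contra hh
  have hh' : (G.neighborSet u).Infinite := hh
  have := hh'.ncard
  rw [hreg u] at this
  omega

lemma ball_finite (hconn : G.Connected)
    (hreg : ∀ u : V', (G.neighborSet u).ncard = 3) (v : V') :
    ∀ n : ℕ, {w | G.dist v w ≤ n}.Finite := by
  intro n
  induction n with
  | zero =>
      apply Set.Finite.subset (Set.finite_singleton v)
      intro w hw
      simp only [Set.mem_setOf_eq, Nat.le_zero] at hw
      have := hconn.dist_eq_zero_iff.mp hw
      simp [this]
  | succ n ih =>
      apply Set.Finite.subset (ih.union (ih.biUnion (fun u _ => nbr_finite hreg u)))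
      intro w hw
      simp only [Set.mem_setOf_eq] at hw
      by_cases hle : G.dist v w ≤ n
      · exact Or.inl hle
      · have hd : G.dist v w = n + 1 := by omega
        obtain ⟨u, hadj, hdu⟩ := exists_parent hconn hd
        right
        simp only [Set.mem_iUnion, Set.mem_setOf_eq]
        exact ⟨u, by omega, hadj⟩

lemma sphere_double (hconn : G.Connected) (hac : G.IsAcyclic)
    (hreg : ∀ u : V', (G.neighborSet u).ncard = 3) (v : V') {k : ℕ} (hk : 1 ≤ k)
    (hfink : {w | G.dist v w = k}.Finite) (hfink1 : {w | G.dist v w = k + 1}.Finite) :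
    {w | G.dist v w = k + 1}.ncard = 2 * {w | G.dist v w = k}.ncard := by
  classical
  have hpar : ∀ w : V', ∃ u : V', G.dist v w = k + 1 → G.Adj u w ∧ G.dist v u = k := by
    intro w
    by_cases hw : G.dist v w = k + 1
    · obtain ⟨u, h1, h2⟩ := exists_parent hconn hw
      exact ⟨u, fun _ => ⟨h1, h2⟩⟩
    · exact ⟨w, fun hh => absurd hh hw⟩
  choose f hf using hpar
  set A := hfink1.toFinset with hA
  set B := hfink.toFinset with hB
  have hmem_A : ∀ w, w ∈ A ↔ G.dist v w = k + 1 := by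
    intro w; rw [hA, Set.Finite.mem_toFinset]; rfl
  have hmem_B : ∀ w, w ∈ B ↔ G.dist v w = k := by
    intro w; rw [hB, Set.Finite.mem_toFinset]; rfl
  have hmaps : ∀ w ∈ A, f w ∈ B := by
    intro w hw
    rw [hmem_A] at hw
    rw [hmem_B]
    exact (hf w hw).2
  have hcard := Finset.card_eq_sum_card_fiberwise hmaps
  have hfiber : ∀ u ∈ B, (A.filter (fun w => f w = u)).card = 2 := by
    intro u hu
    rw [hmem_B] at hu
    have hu' : G.dist v u = (k - 1) + 1 := by omega
    obtain ⟨pu, hpuadj, hpudist⟩ := exists_parent hconn hu'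
    have hnfin := nbr_finite hreg u
    have hfe : A.filter (fun w => f w = u) = hnfin.toFinset.erase pu := by
      ext w
      simp only [Finset.mem_filter, Finset.mem_erase, Set.Finite.mem_toFinset,
        SimpleGraph.mem_neighborSet]
      constructor
      · rintro ⟨hwA, hfw⟩
        rw [hmem_A] at hwA
        obtain ⟨hadj, hdist⟩ := hf w hwA
        rw [hfw] at hadj hdist
        refine ⟨?_, hadj⟩
        intro heq
        rw [heq] at hwA
        omega
      · rintro ⟨hne, hadj⟩
        have hd1 : G.dist v w ≤ k + 1 := by
          have := hconn.dist_triangle (u := v) (v := u) (w := w)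
          have : G.dist u w = 1 := SimpleGraph.dist_eq_one_iff_adj.mpr hadj
          omega
        have hd2 : k ≤ G.dist v w + 1 := by
          have := hconn.dist_triangle (u := v) (v := w) (w := u)
          have : G.dist w u = 1 := SimpleGraph.dist_eq_one_iff_adj.mpr hadj.symm
          omega
        have hd3 : G.dist v w ≠ k := by
          have hne := adj_dist_ne hconn hac (v := v) hadj
          omega
        have hd4 : G.dist v w = k - 1 ∨ G.dist v w = k + 1 := by omega
        rcases hd4 with hd4 | hd4
        · exfalso
          have : w = pu := parent_unique hconn hac hadj.symm (by omega) hpuadj hpudist hu'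
          exact hne this
        · have hwA : w ∈ A := by rw [hmem_A]; exact hd4
          obtain ⟨hadj', hdist'⟩ := hf w hd4
          refine ⟨hwA, ?_⟩
          exact parent_unique hconn hac hadj' hdist' hadj hu hd4
    rw [hfe, Finset.card_erase_of_mem (by
      rw [Set.Finite.mem_toFinset, SimpleGraph.mem_neighborSet]; exact hpuadj.symm)]
    have : hnfin.toFinset.card = 3 := by
      rw [← Set.ncard_eq_toFinset_card _ hnfin]
      exact hreg u
    omega
  have hsum : ∑ u ∈ B, (A.filter (fun w => f w = u)).card = 2 * B.card := by
    rw [Finset.sum_congr rfl hfiber]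
    simp [mul_comm]
  rw [Set.ncard_eq_toFinset_card _ hfink1, Set.ncard_eq_toFinset_card _ hfink]
  rw [← hA, ← hB, hcard, hsum]

lemma sphere_card (hconn : G.Connected) (hac : G.IsAcyclic)
    (hreg : ∀ u : V', (G.neighborSet u).ncard = 3) (v : V') :
    ∀ k : ℕ, 1 ≤ k → {w | G.dist v w = k}.ncard = 3 * 2 ^ (k - 1) := by
  have hsfin : ∀ k : ℕ, {w | G.dist v w = k}.Finite := by
    intro k
    apply Set.Finite.subset (ball_finite hconn hreg v k)
    intro w hw
    simp only [Set.mem_setOf_eq] at hw ⊢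
    omega
  intro k
  induction k with
  | zero => omega
  | succ n ih =>
      intro _
      by_cases hn : 1 ≤ n
      · have hd := sphere_double hconn hac hreg v hn (hsfin n) (hsfin (n+1))
        rw [hd, ih hn]
        have he : n + 1 - 1 = (n - 1) + 1 := by omega
        rw [he, pow_succ]
        ring
      · have hn0 : n = 0 := by omega
        subst hn0
        have hS1 : {w | G.dist v w = 1} = G.neighborSet v := by
          ext w
          simp only [Set.mem_setOf_eq, SimpleGraph.mem_neighborSet]
          exact SimpleGraph.dist_eq_one_iff_adj
        rw [hS1, hreg v]
        norm_num

theorem tree_ball_count (hconn : G.Connected) (hac : G.IsAcyclic)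
    (hreg : ∀ u : V', (G.neighborSet u).ncard = 3) (v : V') (n : ℕ) :
    {w | ∃ p : G.Walk v w, p.length ≤ n}.ncard = 3 * 2 ^ n - 2 := by
  have hset : ∀ m : ℕ, {w | ∃ p : G.Walk v w, p.length ≤ m} = {w | G.dist v w ≤ m} := by
    intro m
    ext w
    simp only [Set.mem_setOf_eq]
    constructor
    · rintro ⟨p, hp⟩
      exact le_trans (SimpleGraph.dist_le p) hp
    · intro hw
      obtain ⟨p, hp⟩ := hconn.exists_walk_length_eq_dist v w
      exact ⟨p, by omega⟩
  rw [hset]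
  have hsfin : ∀ k : ℕ, {w | G.dist v w = k}.Finite := by
    intro k
    apply Set.Finite.subset (ball_finite hconn hreg v k)
    intro w hw
    simp only [Set.mem_setOf_eq] at hw ⊢
    omega
  induction n with
  | zero =>
      have h0 : {w | G.dist v w ≤ 0} = {v} := by
        ext w
        simp only [Set.mem_setOf_eq, Nat.le_zero, Set.mem_singleton_iff]
        rw [hconn.dist_eq_zero_iff]
        exact comm
      rw [h0]
      simp
  | succ n ih =>
      have hsplit : {w | G.dist v w ≤ n + 1} =
          {w | G.dist v w ≤ n} ∪ {w | G.dist v w = n + 1} := by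
        ext w
        simp only [Set.mem_setOf_eq, Set.mem_union]
        omega
      have hdisj : Disjoint {w | G.dist v w ≤ n} {w | G.dist v w = n + 1} := by
        rw [Set.disjoint_left]
        intro w hw1 hw2
        simp only [Set.mem_setOf_eq] at hw1 hw2
        omega
      rw [hsplit, Set.ncard_union_eq hdisj (ball_finite hconn hreg v n) (hsfin (n+1))]
      rw [ih, sphere_card hconn hac hreg v (n+1) (by omega)]
      have hp1 : 1 ≤ 2 ^ n := Nat.one_le_two_pow
      have he : n + 1 - 1 = n := by omega
      rw [he]
      have hps : 2 ^ (n + 1) = 2 * 2 ^ n := by rw [pow_succ]; ring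
      omega

end TreeCount


/-- The exchange graph of Farey triples is a 3-regular tree: it is connected,
acyclic, and every vertex has exactly three neighbours.  In particular, for every
Farey triple `v` and every `n : ℕ`, the number of Farey triples obtainable from `v`
by a sequence of at most `n` mutations equals `3 * 2 ^ n - 2`. -/
theorem fareyExchangeGraph_threeRegularTree :
    fareyExchangeGraph.Connected ∧ fareyExchangeGraph.IsAcyclic ∧
    (∀ v, (fareyExchangeGraph.neighborSet v).ncard = 3) ∧
    (∀ (v : {s : Set QInf // IsFareyTriple s}) (n : ℕ),
      {w | ∃ p : fareyExchangeGraph.Walk v w, p.length ≤ n}.ncard = 3 * 2 ^ n - 2) := by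
  refine ⟨farey_connected, farey_acyclic, degree_three, fun v n => ?_⟩
  exact tree_ball_count farey_connected farey_acyclic degree_three v n
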